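/- Let p be a prime and let j ≥ 0 be an integer. Then, in F_p[X,Z], the identity (X−Z)·φ_j(X,X,Z) = j·(X^{j−1} − Z^{j−1}) holds (where φ_j(X,X,Z) denotes the specialization of φ_j at Y = X). -/
import Mathlib

open MvPolynomial

theorem phi_specialization_eq
    (p : ℕ) (hp : p.Prime) (j : ℕ)
    (φ : MvPolynomial (Fin 3) (ZMod p))
    (hφ : (X 0 - X 1) * (X 0 - X 2) * φ =
      X 0 ^ j - X 1 ^ j - X 2 ^ j + (-X 0 + X 1 + X 2) ^ j) :
    (X 0 - X 1) * (aeval ![X 0, X 0, X 1] φ) =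
      (j : MvPolynomial (Fin 2) (ZMod p)) * (X 0 ^ (j - 1) - X 1 ^ (j - 1)) := by
  have h := congrArg (pderiv (1 : Fin 3)) hφ
  simp only [pderiv_mul, map_sub, map_add, map_neg, pderiv_X_self,
    pderiv_X_of_ne (by decide : (0:Fin 3) ≠ 1), pderiv_X_of_ne (by decide : (2:Fin 3) ≠ 1),
    Derivation.leibniz_pow, smul_eq_mul, mul_one, mul_zero, zero_sub, sub_zero,
    neg_zero, zero_add, add_zero] at h
  have h2 := congrArg (aeval ![X 0, X 0, X 1] : MvPolynomial (Fin 3) (ZMod p) →ₐ[ZMod p] MvPolynomial (Fin 2) (ZMod p)) h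
  simp only [map_mul, map_sub, map_add, map_neg, map_pow, map_one, map_zero,
    aeval_X, map_nsmul, nsmul_eq_mul, map_natCast] at h2
  simp only [Matrix.cons_val_zero, Matrix.cons_val_one, Matrix.head_cons,
    Matrix.cons_val_two, Matrix.tail_cons, sub_self, zero_mul, mul_zero, zero_add,
    add_zero] at h2
  have : -X 0 + X 0 + X 1 = (X 1 : MvPolynomial (Fin 2) (ZMod p)) := by ring
  rw [this] at h2
  linear_combination -h2
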